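/- arXiv:1207.4031 — 2 statements merged into one kernel-verified Lean document; each statement's English description precedes it below -/
import Mathlib

section
/- For any k ≥ 1, E(U_{k,0,m,n}²) = E ξ_0⁴ + (E ξ_0²)² · ( 4 Σ_{j=1}^{m−1} θ_n^{2j} − 1 ). -/
open MeasureTheory ProbabilityTheory Filter Real

open scoped ENNReal in
lemma USM_two_inv_eq : (2:ℝ≥0∞)⁻¹ = 4⁻¹ + 4⁻¹ := by
  have : (4:ℝ≥0∞) = 2 * 2 := by norm_num
  rw [this, ENNReal.mul_inv (by norm_num) (by norm_num), ← two_mul, ← mul_assoc,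
    ENNReal.mul_inv_cancel (by norm_num) (by norm_num), one_mul]

lemma USM_memLp_mul {Ω : Type*} [MeasureSpace Ω] {f g : Ω → ℝ}
    (hf : MemLp f 4 ℙ) (hg : MemLp g 4 ℙ) :
    MemLp (fun ω => f ω * g ω) 2 ℙ := by
  have h := MemLp.smul (hf := hg) (hφ := hf) (r := 2)
    (hpqr := ⟨USM_two_inv_eq.symm⟩)
  simpa [Pi.smul_apply, smul_eq_mul, Pi.mul_def] using h

lemma USM_integrable_mul {Ω : Type*} [MeasureSpace Ω] {f g : Ω → ℝ}
    (hf : MemLp f 2 ℙ) (hg : MemLp g 2 ℙ) :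
    Integrable (fun ω => f ω * g ω) ℙ := by
  have h := MemLp.smul (hf := hg) (hφ := hf) (r := 1)
    (hpqr := ⟨by simpa using ENNReal.inv_two_add_inv_two⟩)
  rw [← memLp_one_iff_integrable]
  simpa [Pi.smul_apply, smul_eq_mul, Pi.mul_def] using h

theorem U_second_moment_lag_zero
    {Ω : Type*} [MeasureSpace Ω] [IsProbabilityMeasure (ℙ : Measure Ω)]
    (ξ : ℤ → Ω → ℝ)
    (hmeas : ∀ k, Measurable (ξ k))
    (hindep : iIndepFun ξ ℙ)
    (hident : ∀ k, IdentDistrib (ξ k) (ξ 0) ℙ ℙ)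
    (hcentered : 𝔼[ξ 0] = 0)
    (hL4 : MemLp (ξ 0) 4 ℙ)
    (θ : ℝ) (hθ : θ ∈ Set.Ico (0 : ℝ) 1)
    (M m : ℕ) (hm : 2 * M < m)
    (U : ℕ → ℕ → Ω → ℝ)
    (hU : ∀ k l ω, U k l ω =
      ∑ j ∈ Finset.Icc 1 (m - 1), θ ^ j * ξ ((k : ℤ) + l - j) ω * ξ (k : ℤ) ω +
      ∑ j ∈ Finset.Icc 1 (m - 1), θ ^ j * ξ ((k : ℤ) + l) ω * ξ ((k : ℤ) - j) ω +
      ξ ((k : ℤ) + l) ω * ξ (k : ℤ) ω - θ ^ l * 𝔼[fun ω => (ξ 0 ω) ^ 2])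
    (k : ℕ) (hk : 1 ≤ k) :
    𝔼[fun ω => (U k 0 ω) ^ 2] =
      𝔼[fun ω => (ξ 0 ω) ^ 4] +
        (𝔼[fun ω => (ξ 0 ω) ^ 2]) ^ 2 *
          (4 * ∑ j ∈ Finset.Icc 1 (m - 1), θ ^ (2 * j) - 1) := by
  classical
  set σ2 : ℝ := 𝔼[fun ω => (ξ 0 ω) ^ 2] with hσ2
  set I : Finset ℕ := Finset.Icc 1 (m - 1) with hI
  -- basic moment facts
  have hmem4 : ∀ i : ℤ, MemLp (ξ i) 4 ℙ := fun i => (hident i).symm.memLp_snd hL4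
  have hmem2 : ∀ i : ℤ, MemLp (ξ i) 2 ℙ :=
    fun i => (hmem4 i).mono_exponent (by norm_num)
  have hint : ∀ i : ℤ, Integrable (ξ i) ℙ := fun i => (hmem2 i).integrable one_le_two
  have hmean : ∀ i : ℤ, ∫ ω, ξ i ω ∂ℙ = 0 := fun i => ((hident i).integral_eq).trans hcentered
  have hmemsq : ∀ i : ℤ, MemLp (fun ω => ξ i ω ^ 2) 2 ℙ := fun i => by
    simpa [pow_two] using USM_memLp_mul (hmem4 i) (hmem4 i)
  have hintsq : ∀ i : ℤ, Integrable (fun ω => ξ i ω ^ 2) ℙ :=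
    fun i => (hmemsq i).integrable one_le_two
  have hmom2 : ∀ i : ℤ, ∫ ω, ξ i ω ^ 2 ∂ℙ = σ2 := by
    intro i
    have h := ((hident i).comp (measurable_id.pow_const 2)).integral_eq
    simpa [Function.comp] using h
  have hmom4 : ∫ ω, ξ (k : ℤ) ω ^ 4 ∂ℙ = 𝔼[fun ω => (ξ 0 ω) ^ 4] := by
    have h := ((hident (k : ℤ)).comp (measurable_id.pow_const 4)).integral_eq
    simpa [Function.comp] using h
  -- the auxiliary sum S and the variable V
  set V : Ω → ℝ := ξ (k : ℤ) with hV
  set S : Ω → ℝ := fun ω => ∑ j ∈ I, θ ^ j * ξ ((k : ℤ) - j) ω with hS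
  -- rewriting of U k 0
  have hU0 : ∀ ω, U k 0 ω = 2 * S ω * V ω + (V ω ^ 2 - σ2) := by
    intro ω
    rw [hU]
    have eA : ∑ j ∈ I, θ ^ j * ξ ((k : ℤ) + (0:ℕ) - j) ω * ξ (k : ℤ) ω = S ω * V ω := by
      rw [hS, hV, Finset.sum_mul]
      exact Finset.sum_congr rfl fun j _ => by push_cast; ring_nf
    have eB : ∑ j ∈ I, θ ^ j * ξ ((k : ℤ) + (0:ℕ)) ω * ξ ((k : ℤ) - j) ω = S ω * V ω := by
      rw [hS, hV, Finset.sum_mul]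
      exact Finset.sum_congr rfl fun j _ => by push_cast; ring_nf
    rw [eA, eB]
    have : ξ ((k : ℤ) + (0:ℕ)) ω = V ω := by norm_num [hV]
    rw [this]
    simp [pow_two]
    ring
  -- independence of S and V
  set c : ℤ → ℝ := fun i => θ ^ ((k : ℤ) - i).toNat with hc
  set η : ℤ → Ω → ℝ := fun i ω => c i * ξ i ω with hη
  have hη_meas : ∀ i, Measurable (η i) := fun i => (hmeas i).const_mul _
  have hη_indep : iIndepFun η ℙ :=
    hindep.comp (fun i (x : ℝ) => c i * x) (fun i => measurable_const_mul _)
  set T1 : Finset ℤ := I.image (fun j : ℕ => (k : ℤ) - j) with hT1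
  have hkT1 : (k : ℤ) ∉ T1 := by
    simp only [hT1, hI, Finset.mem_image, Finset.mem_Icc]
    rintro ⟨j, ⟨hj1, _⟩, hj⟩
    omega
  have hS_sum : S = ∑ i ∈ T1, η i := by
    funext ω
    rw [Finset.sum_apply, hT1, Finset.sum_image (by intro a _ b _ hab; have h' : (k:ℤ) - a = k - b := hab; omega)]
    refine Finset.sum_congr rfl fun j _ => ?_
    simp only [hη, hc]
    have hj : ((k : ℤ) - ((k : ℤ) - (j : ℤ))).toNat = j := by omega
    rw [hj]
  have hSV_indep : IndepFun S V ℙ := by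
    have h := hη_indep.indepFun_finsetSum_of_notMem hη_meas hkT1
    rw [← hS_sum] at h
    have hηk : η (k : ℤ) = V := by
      funext ω
      simp [hη, hc, hV]
    rwa [hηk] at h
  -- MemLp facts for S
  have hS_mem4 : MemLp S 4 ℙ := by
    rw [hS]
    exact memLp_finset_sum _ (fun j _ => (hmem4 _).const_mul _)
  have hS_mem2 : MemLp S 2 ℙ := hS_mem4.mono_exponent (by norm_num)
  have hS_int : Integrable S ℙ := hS_mem2.integrable one_le_two
  have hS_meas : Measurable S := by
    rw [hS]
    exact Finset.measurable_sum _ fun j _ => ((hmeas _).const_mul _)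
  have hS_mean : ∫ ω, S ω ∂ℙ = 0 := by
    rw [hS]
    rw [integral_finset_sum _ (fun j _ => ((hint _).const_mul _))]
    simp [integral_const_mul, hmean]
  -- second moment of S
  have hS_sq : ∫ ω, S ω ^ 2 ∂ℙ = σ2 * ∑ j ∈ I, θ ^ (2 * j) := by
    have expand : ∀ ω, S ω ^ 2 =
        ∑ i ∈ I, ∑ j ∈ I, (θ ^ i * ξ ((k : ℤ) - i) ω) * (θ ^ j * ξ ((k : ℤ) - j) ω) := by
      intro ω
      rw [hS, pow_two, Finset.sum_mul_sum]
    have key : ∀ i ∈ I, ∀ j ∈ I,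
        ∫ ω, (θ ^ i * ξ ((k : ℤ) - i) ω) * (θ ^ j * ξ ((k : ℤ) - j) ω) ∂ℙ
          = if j = i then θ ^ (2 * i) * σ2 else 0 := by
      intro i _ j _
      by_cases hij : j = i
      · subst hij
        simp only [if_pos rfl]
        have e : ∀ ω, (θ ^ j * ξ ((k : ℤ) - j) ω) * (θ ^ j * ξ ((k : ℤ) - j) ω)
            = θ ^ (2 * j) * ξ ((k : ℤ) - j) ω ^ 2 := by
          intro ω
          rw [two_mul, pow_add]
          ring
        simp only [e]
        rw [integral_const_mul, hmom2]
        simp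
      · simp only [if_neg hij]
        have hne : ((k : ℤ) - i) ≠ ((k : ℤ) - j) := by
          intro h
          exact hij (by omega)
        have h2 : IndepFun (fun ω => θ ^ i * ξ ((k : ℤ) - i) ω)
            (fun ω => θ ^ j * ξ ((k : ℤ) - j) ω) ℙ :=
          (hindep.indepFun hne).comp (measurable_const_mul _) (measurable_const_mul _)
        have h3 := h2.integral_mul_eq_mul_integral ((hint _).const_mul _).aestronglyMeasurable ((hint _).const_mul _).aestronglyMeasurable
        simp only [Pi.mul_apply] at h3
        rw [show (fun ω => (θ ^ i * ξ ((k : ℤ) - i) ω) * (θ ^ j * ξ ((k : ℤ) - j) ω)) =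
          (fun ω => θ ^ i * ξ ((k : ℤ) - i) ω) * (fun ω => θ ^ j * ξ ((k : ℤ) - j) ω) from rfl]
        simp only [Pi.mul_def]
        rw [h3, integral_const_mul, integral_const_mul, hmean, hmean]
        ring
    calc ∫ ω, S ω ^ 2 ∂ℙ
        = ∫ ω, ∑ i ∈ I, ∑ j ∈ I,
            (θ ^ i * ξ ((k : ℤ) - i) ω) * (θ ^ j * ξ ((k : ℤ) - j) ω) ∂ℙ := by
          simp only [expand]
      _ = ∑ i ∈ I, ∑ j ∈ I,
            ∫ ω, (θ ^ i * ξ ((k : ℤ) - i) ω) * (θ ^ j * ξ ((k : ℤ) - j) ω) ∂ℙ := by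
          rw [integral_finset_sum _ (fun i _ => integrable_finset_sum _ (fun j _ =>
            USM_integrable_mul ((hmem2 _).const_mul _) ((hmem2 _).const_mul _)))]
          exact Finset.sum_congr rfl fun i _ =>
            integral_finset_sum _ (fun j _ =>
              USM_integrable_mul ((hmem2 _).const_mul _) ((hmem2 _).const_mul _))
      _ = ∑ i ∈ I, θ ^ (2 * i) * σ2 := by
          refine Finset.sum_congr rfl fun i hi => ?_
          rw [Finset.sum_congr rfl (fun j hj => key i hi j hj)]
          rw [Finset.sum_ite_eq' I i fun _ => θ ^ (2 * i) * σ2, if_pos hi]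
      _ = σ2 * ∑ j ∈ I, θ ^ (2 * j) := by
          rw [Finset.mul_sum]
          exact Finset.sum_congr rfl fun j _ => mul_comm _ _
  -- term A : ∫ S^2 V^2
  have hA : ∫ ω, S ω ^ 2 * V ω ^ 2 ∂ℙ = (σ2 * ∑ j ∈ I, θ ^ (2 * j)) * σ2 := by
    have hInd : IndepFun (fun ω => S ω ^ 2) (fun ω => V ω ^ 2) ℙ :=
      hSV_indep.comp (measurable_id.pow_const 2) (measurable_id.pow_const 2)
    have h3 := hInd.integral_mul_eq_mul_integral ((hS_meas.pow_const 2).aestronglyMeasurable)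
      (((hmeas _).pow_const 2).aestronglyMeasurable)
    simp only [Pi.mul_apply] at h3
    rw [show (fun ω => S ω ^ 2 * V ω ^ 2) =
      (fun ω => S ω ^ 2) * (fun ω => V ω ^ 2) from rfl]
    simp only [Pi.mul_def]
    rw [h3, hS_sq, hV, hmom2]
  -- term B : ∫ S * (V^3 - σ2 V) = 0
  have hB : ∫ ω, S ω * (V ω * (V ω ^ 2 - σ2)) ∂ℙ = 0 := by
    have hInd : IndepFun S (fun ω => V ω * (V ω ^ 2 - σ2)) ℙ :=
      hSV_indep.comp measurable_id
        (measurable_id.mul ((measurable_id.pow_const 2).sub measurable_const))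
    have h3 := hInd.integral_mul_eq_mul_integral hS_meas.aestronglyMeasurable
      ((((hmeas _).mul (((hmeas _).pow_const 2).sub measurable_const))).aestronglyMeasurable)
    simp only [Pi.mul_apply] at h3
    rw [show (fun ω => S ω * (V ω * (V ω ^ 2 - σ2))) =
      S * (fun ω => V ω * (V ω ^ 2 - σ2)) from rfl]
    simp only [Pi.mul_def]
    rw [h3, hS_mean, zero_mul]
  -- term C : ∫ (V^2 - σ2)^2
  have hC : ∫ ω, (V ω ^ 2 - σ2) ^ 2 ∂ℙ = (∫ ω, V ω ^ 4 ∂ℙ) - σ2 ^ 2 := by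
    have e : ∀ ω, (V ω ^ 2 - σ2) ^ 2 = V ω ^ 4 - (2 * σ2) * V ω ^ 2 + σ2 ^ 2 := by
      intro ω; ring
    simp only [e]
    have hint4 : Integrable (fun ω => V ω ^ 4) ℙ := by
      have := USM_integrable_mul (hmemsq (k : ℤ)) (hmemsq (k : ℤ))
      simpa [hV, show ∀ x : ℝ, x ^ 2 * x ^ 2 = x ^ 4 from fun x => by ring] using this
    have hintc : Integrable (fun ω => (2 * σ2) * V ω ^ 2) ℙ := (hintsq (k : ℤ)).const_mul _
    have hsub : Integrable (fun ω => V ω ^ 4 - (2 * σ2) * V ω ^ 2) ℙ := hint4.sub hintc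
    rw [integral_add hsub (integrable_const _), integral_sub hint4 hintc,
      integral_const_mul, integral_const]
    have : ∫ ω, V ω ^ 2 ∂ℙ = σ2 := hmom2 (k : ℤ)
    rw [this]
    simp [measure_univ]
    ring
  -- integrability of the three pieces
  have hSV_mem2 : MemLp (fun ω => S ω * V ω) 2 ℙ := USM_memLp_mul hS_mem4 (hmem4 _)
  have hQ_mem2 : MemLp (fun ω => V ω ^ 2 - σ2) 2 ℙ := (hmemsq _).sub (memLp_const _)
  have hS2_mem2 : MemLp (fun ω => S ω ^ 2) 2 ℙ := by
    simpa [pow_two] using USM_memLp_mul hS_mem4 hS_mem4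
  have hintA : Integrable (fun ω => S ω ^ 2 * V ω ^ 2) ℙ :=
    USM_integrable_mul hS2_mem2 (hmemsq _)
  have hintB : Integrable (fun ω => S ω * (V ω * (V ω ^ 2 - σ2))) ℙ := by
    have := USM_integrable_mul hSV_mem2 hQ_mem2
    simpa [mul_assoc, mul_comm, mul_left_comm] using this
  have hintC : Integrable (fun ω => (V ω ^ 2 - σ2) ^ 2) ℙ := by
    simpa [pow_two] using USM_integrable_mul hQ_mem2 hQ_mem2
  -- final computation
  have expand2 : ∀ ω, (U k 0 ω) ^ 2 =
      4 * (S ω ^ 2 * V ω ^ 2) + 4 * (S ω * (V ω * (V ω ^ 2 - σ2))) + (V ω ^ 2 - σ2) ^ 2 := by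
    intro ω
    rw [hU0 ω]
    ring
  calc 𝔼[fun ω => (U k 0 ω) ^ 2]
      = ∫ ω, (4 * (S ω ^ 2 * V ω ^ 2) + 4 * (S ω * (V ω * (V ω ^ 2 - σ2)))
          + (V ω ^ 2 - σ2) ^ 2) ∂ℙ := by
        simp only [expand2]
    _ = 4 * ((σ2 * ∑ j ∈ I, θ ^ (2 * j)) * σ2) + 4 * 0
          + ((∫ ω, V ω ^ 4 ∂ℙ) - σ2 ^ 2) := by
        have h1 : Integrable (fun ω => 4 * (S ω ^ 2 * V ω ^ 2)) ℙ := hintA.const_mul 4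
        have h2 : Integrable (fun ω => 4 * (S ω * (V ω * (V ω ^ 2 - σ2)))) ℙ :=
          hintB.const_mul 4
        have h12 : Integrable (fun ω => 4 * (S ω ^ 2 * V ω ^ 2)
            + 4 * (S ω * (V ω * (V ω ^ 2 - σ2)))) ℙ := h1.add h2
        rw [integral_add h12 hintC, integral_add h1 h2, integral_const_mul, integral_const_mul,
          hA, hB, hC]
    _ = 𝔼[fun ω => (ξ 0 ω) ^ 4] + σ2 ^ 2 * (4 * ∑ j ∈ I, θ ^ (2 * j) - 1) := by
        rw [hmom4]
        ring
end

section
/- For integers 1 ≤ i < k and 1 ≤ l ≤ M, E(U_{k,0,m,n} U_{i,l,m,n}) = 2 θ_n^l (E ξ_0²)² · ( 1_{A₁} + 1_{A₂} Σ_{j=0}^{m−1−l} θ_n^{2j} ), where A₁ denotes the condition i + l > k and A₂ the condition i + l = k. -/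
set_option linter.unusedSectionVars false
open MeasureTheory ProbabilityTheory Filter Real

section Helpers

variable {Ω : Type*} [MeasureSpace Ω] [IsProbabilityMeasure (ℙ : Measure Ω)]
  {ξ : ℤ → Ω → ℝ}
  (hmeas : ∀ k, Measurable (ξ k))
  (hindep : iIndepFun ξ ℙ)
  (hident : ∀ k, IdentDistrib (ξ k) (ξ 0) ℙ ℙ)
  (hcentered : 𝔼[ξ 0] = 0)
  (hL4 : MemLp (ξ 0) 4 ℙ)

lemma UX.memL2_mul {f g : Ω → ℝ} (hf : MemLp f 4 ℙ) (hg : MemLp g 4 ℙ) :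
    MemLp (fun ω => f ω * g ω) 2 ℙ := by
  haveI : ENNReal.HolderTriple 4 4 2 := ⟨by
    rw [← two_mul, show (4:ENNReal) = 2*2 by norm_num,
      ENNReal.mul_inv (by norm_num) (by norm_num), ← mul_assoc,
      ENNReal.mul_inv_cancel (by norm_num) (by norm_num), one_mul]⟩
  have h := hg.smul hf (p := 4) (q := 4) (r := 2)
  exact h

lemma UX.integrable_mul_L2 {f g : Ω → ℝ} (hf : MemLp f 2 ℙ) (hg : MemLp g 2 ℙ) :
    Integrable (fun ω => f ω * g ω) ℙ := by
  haveI : ENNReal.HolderTriple 2 2 1 := ⟨by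
    simp only [inv_one]
    rw [← two_mul, ENNReal.mul_inv_cancel (by norm_num) (by norm_num)]⟩
  have h := hg.smul hf (p := 2) (q := 2) (r := 1)
  rw [← memLp_one_iff_integrable]
  exact h

include hident hL4 in
lemma UX.memL4 (a : ℤ) : MemLp (ξ a) 4 ℙ := (hident a).symm.memLp_snd hL4

include hident hL4 in
lemma UX.memL2 (a : ℤ) : MemLp (ξ a) 2 ℙ :=
  (UX.memL4 hident hL4 a).mono_exponent (by norm_num)

include hident hcentered in
lemma UX.mean (a : ℤ) : ∫ ω, ξ a ω = 0 := by
  rw [(hident a).integral_eq]; exact hcentered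

include hident in
lemma UX.sq (a : ℤ) : ∫ ω, ξ a ω * ξ a ω = 𝔼[fun ω => (ξ 0 ω) ^ 2] := by
  have h := ((hident a).comp (measurable_id.mul measurable_id)).integral_eq
  simpa [Function.comp, pow_two] using h

include hmeas hindep in
lemma UX.indep_one_three (a b c d : ℤ) (hab : a ≠ b) (hac : a ≠ c) (had : a ≠ d) :
    IndepFun (ξ a) (fun ω => ξ b ω * (ξ c ω * ξ d ω)) ℙ := by
  classical
  have h := hindep.indepFun_finset {a} ({b, c, d} : Finset ℤ)
    (by simp [Finset.disjoint_left, hab, hac, had]) hmeas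
  have hφ : Measurable fun v : (({a} : Finset ℤ) → ℝ) => v ⟨a, by simp⟩ :=
    measurable_pi_apply _
  have hψ : Measurable fun v : ((({b, c, d} : Finset ℤ)) → ℝ) =>
      v ⟨b, by simp⟩ * (v ⟨c, by simp⟩ * v ⟨d, by simp⟩) :=
    (measurable_pi_apply _).mul ((measurable_pi_apply _).mul (measurable_pi_apply _))
  exact h.comp hφ hψ

include hmeas hindep in
lemma UX.indep_sq_pair (a b c : ℤ) (hab : a ≠ b) (hac : a ≠ c) :
    IndepFun (fun ω => ξ a ω * ξ a ω) (fun ω => ξ b ω * ξ c ω) ℙ := by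
  classical
  have h := hindep.indepFun_finset {a} ({b, c} : Finset ℤ)
    (by simp [Finset.disjoint_left, hab, hac]) hmeas
  have hφ : Measurable fun v : (({a} : Finset ℤ) → ℝ) => v ⟨a, by simp⟩ * v ⟨a, by simp⟩ :=
    (measurable_pi_apply _).mul (measurable_pi_apply _)
  have hψ : Measurable fun v : ((({b, c} : Finset ℤ)) → ℝ) =>
      v ⟨b, by simp⟩ * v ⟨c, by simp⟩ :=
    (measurable_pi_apply _).mul (measurable_pi_apply _)
  exact h.comp hφ hψ

include hmeas hindep in
lemma UX.indep_cube (a b : ℤ) (hab : a ≠ b) :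
    IndepFun (fun ω => ξ a ω * ξ a ω * ξ a ω) (ξ b) ℙ :=
  (hindep.indepFun hab).comp ((measurable_id.mul measurable_id).mul measurable_id)
    measurable_id

include hmeas hindep hident hcentered in
lemma UX.pair (a b : ℤ) :
    ∫ ω, ξ a ω * ξ b ω = if a = b then 𝔼[fun ω => (ξ 0 ω) ^ 2] else 0 := by
  rcases eq_or_ne a b with h | h
  · subst h; rw [if_pos rfl]; exact UX.sq hident a
  · rw [if_neg h]
    have h2 := (hindep.indepFun h).integral_fun_mul_eq_mul_integral
      (hmeas a).aestronglyMeasurable (hmeas b).aestronglyMeasurable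
    rw [h2, UX.mean hident hcentered, zero_mul]

include hmeas hindep hident hcentered in
lemma UX.E4 (a b c d : ℤ) (hab : a ≠ b) (hdb : d ≠ b) :
    ∫ ω, ξ a ω * ξ b ω * (ξ c ω * ξ d ω) =
      (if b = c then 𝔼[fun ω => (ξ 0 ω) ^ 2] else 0) *
        (if a = d then 𝔼[fun ω => (ξ 0 ω) ^ 2] else 0) := by
  by_cases hbc : b = c
  · subst hbc
    rw [if_pos rfl]
    have h1 : (∫ ω, ξ a ω * ξ b ω * (ξ b ω * ξ d ω)) =
        ∫ ω, (ξ b ω * ξ b ω) * (ξ a ω * ξ d ω) := by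
      congr 1; funext ω; ring
    rw [h1, (UX.indep_sq_pair hmeas hindep b a d hab.symm hdb.symm).integral_fun_mul_eq_mul_integral
        ((hmeas b).mul (hmeas b)).aestronglyMeasurable
        ((hmeas a).mul (hmeas d)).aestronglyMeasurable,
      UX.sq hident b, UX.pair hmeas hindep hident hcentered a d]
  · rw [if_neg hbc, zero_mul]
    have h1 : (∫ ω, ξ a ω * ξ b ω * (ξ c ω * ξ d ω)) =
        ∫ ω, ξ b ω * (ξ a ω * (ξ c ω * ξ d ω)) := by
      congr 1; funext ω; ring
    rw [h1, (UX.indep_one_three hmeas hindep b a c d hab.symm hbc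
        hdb.symm).integral_fun_mul_eq_mul_integral (hmeas b).aestronglyMeasurable
        ((hmeas a).mul ((hmeas c).mul (hmeas d))).aestronglyMeasurable,
      UX.mean hident hcentered, zero_mul]

include hmeas hindep hident hcentered in
lemma UX.E4sq (b c d : ℤ) (hdb : d ≠ b) :
    ∫ ω, ξ b ω * ξ b ω * (ξ c ω * ξ d ω) =
      if c = d then 𝔼[fun ω => (ξ 0 ω) ^ 2] * 𝔼[fun ω => (ξ 0 ω) ^ 2] else 0 := by
  by_cases hbc : b = c
  · subst hbc
    rw [if_neg (fun h => hdb h.symm)]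
    have h1 : (∫ ω, ξ b ω * ξ b ω * (ξ b ω * ξ d ω)) =
        ∫ ω, (ξ b ω * ξ b ω * ξ b ω) * ξ d ω := by
      congr 1; funext ω; ring
    rw [h1, (UX.indep_cube hmeas hindep b d (Ne.symm hdb)).integral_fun_mul_eq_mul_integral
        (((hmeas b).mul (hmeas b)).mul (hmeas b)).aestronglyMeasurable
        (hmeas d).aestronglyMeasurable,
      UX.mean hident hcentered, mul_zero]
  · rw [(UX.indep_sq_pair hmeas hindep b c d hbc hdb.symm).integral_fun_mul_eq_mul_integral
        ((hmeas b).mul (hmeas b)).aestronglyMeasurable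
        ((hmeas c).mul (hmeas d)).aestronglyMeasurable,
      UX.sq hident b, UX.pair hmeas hindep hident hcentered c d, mul_ite, mul_zero]

include hmeas hident hL4 in
lemma UX.mulU {m : ℕ} {θ : ℝ} {U : ℕ → ℕ → Ω → ℝ}
    (hU : ∀ k l ω, U k l ω =
      ∑ j ∈ Finset.Icc 1 (m - 1), θ ^ j * ξ ((k : ℤ) + l - j) ω * ξ (k : ℤ) ω +
      ∑ j ∈ Finset.Icc 1 (m - 1), θ ^ j * ξ ((k : ℤ) + l) ω * ξ ((k : ℤ) - j) ω +
      ξ ((k : ℤ) + l) ω * ξ (k : ℤ) ω - θ ^ l * 𝔼[fun ω => (ξ 0 ω) ^ 2])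
    (p q : ℕ) (f : Ω → ℝ) (hf : MemLp f 2 ℙ) :
    ∫ ω, f ω * U p q ω =
      (∑ j ∈ Finset.Icc 1 (m - 1), θ ^ j * ∫ ω, f ω * (ξ ((p : ℤ) + q - j) ω * ξ (p : ℤ) ω))
      + (∑ j ∈ Finset.Icc 1 (m - 1), θ ^ j * ∫ ω, f ω * (ξ ((p : ℤ) + q) ω * ξ ((p : ℤ) - j) ω))
      + (∫ ω, f ω * (ξ ((p : ℤ) + q) ω * ξ (p : ℤ) ω))
      - θ ^ q * 𝔼[fun ω => (ξ 0 ω) ^ 2] * ∫ ω, f ω := by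
  have hint : ∀ a b : ℤ, Integrable (fun ω => f ω * (ξ a ω * ξ b ω)) ℙ := fun a b =>
    UX.integrable_mul_L2 hf (UX.memL2_mul (UX.memL4 hident hL4 a) (UX.memL4 hident hL4 b))
  have hpt : (fun ω => f ω * U p q ω) = fun ω =>
      (∑ j ∈ Finset.Icc 1 (m - 1), θ ^ j * (f ω * (ξ ((p : ℤ) + q - j) ω * ξ (p : ℤ) ω)))
      + (∑ j ∈ Finset.Icc 1 (m - 1), θ ^ j * (f ω * (ξ ((p : ℤ) + q) ω * ξ ((p : ℤ) - j) ω)))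
      + f ω * (ξ ((p : ℤ) + q) ω * ξ (p : ℤ) ω)
      - θ ^ q * 𝔼[fun ω => (ξ 0 ω) ^ 2] * f ω := by
    funext ω
    have h1 : (∑ j ∈ Finset.Icc 1 (m - 1), θ ^ j * (f ω * (ξ ((p:ℤ)+q-j) ω * ξ (p:ℤ) ω)))
        = f ω * ∑ j ∈ Finset.Icc 1 (m - 1), θ ^ j * ξ ((p:ℤ)+q-j) ω * ξ (p:ℤ) ω := by
      rw [Finset.mul_sum]; exact Finset.sum_congr rfl fun j _ => by ring
    have h2 : (∑ j ∈ Finset.Icc 1 (m - 1), θ ^ j * (f ω * (ξ ((p:ℤ)+q) ω * ξ ((p:ℤ)-j) ω)))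
        = f ω * ∑ j ∈ Finset.Icc 1 (m - 1), θ ^ j * ξ ((p:ℤ)+q) ω * ξ ((p:ℤ)-j) ω := by
      rw [Finset.mul_sum]; exact Finset.sum_congr rfl fun j _ => by ring
    rw [hU p q ω, h1, h2]; ring
  have hS1 : Integrable (fun ω => ∑ j ∈ Finset.Icc 1 (m - 1),
      θ ^ j * (f ω * (ξ ((p:ℤ)+q-j) ω * ξ (p:ℤ) ω))) ℙ :=
    integrable_finset_sum _ fun j _ => (hint _ _).const_mul _
  have hS2 : Integrable (fun ω => ∑ j ∈ Finset.Icc 1 (m - 1),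
      θ ^ j * (f ω * (ξ ((p:ℤ)+q) ω * ξ ((p:ℤ)-j) ω))) ℙ :=
    integrable_finset_sum _ fun j _ => (hint _ _).const_mul _
  have hA : Integrable (fun ω =>
      (∑ j ∈ Finset.Icc 1 (m - 1), θ ^ j * (f ω * (ξ ((p:ℤ)+q-j) ω * ξ (p:ℤ) ω)))
      + (∑ j ∈ Finset.Icc 1 (m - 1), θ ^ j * (f ω * (ξ ((p:ℤ)+q) ω * ξ ((p:ℤ)-j) ω)))
      + f ω * (ξ ((p:ℤ)+q) ω * ξ (p:ℤ) ω)) ℙ := (hS1.add hS2).add (hint _ _)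
  have hA2 : Integrable (fun ω =>
      (∑ j ∈ Finset.Icc 1 (m - 1), θ ^ j * (f ω * (ξ ((p:ℤ)+q-j) ω * ξ (p:ℤ) ω)))
      + (∑ j ∈ Finset.Icc 1 (m - 1), θ ^ j * (f ω * (ξ ((p:ℤ)+q) ω * ξ ((p:ℤ)-j) ω)))) ℙ :=
    hS1.add hS2
  have hB : Integrable (fun ω => θ ^ q * 𝔼[fun ω => (ξ 0 ω) ^ 2] * f ω) ℙ :=
    (hf.integrable one_le_two).const_mul _
  rw [hpt, integral_sub hA hB,
    integral_add hA2 (hint _ _), integral_add hS1 hS2,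
    integral_finset_sum _ (fun j _ => (hint _ _).const_mul _),
    integral_finset_sum _ (fun j _ => (hint _ _).const_mul _)]
  simp only [MeasureTheory.integral_const_mul]

end Helpers

theorem U_cross_covariance_zero_lag_second
    {Ω : Type*} [MeasureSpace Ω] [IsProbabilityMeasure (ℙ : Measure Ω)]
    (ξ : ℤ → Ω → ℝ)
    (hmeas : ∀ k, Measurable (ξ k))
    (hindep : iIndepFun ξ ℙ)
    (hident : ∀ k, IdentDistrib (ξ k) (ξ 0) ℙ ℙ)
    (hcentered : 𝔼[ξ 0] = 0)
    (hL4 : MemLp (ξ 0) 4 ℙ)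
    (θ : ℝ) (hθ : θ ∈ Set.Ico (0 : ℝ) 1)
    (M m : ℕ) (hm : 2 * M < m)
    (U : ℕ → ℕ → Ω → ℝ)
    (hU : ∀ k l ω, U k l ω =
      ∑ j ∈ Finset.Icc 1 (m - 1), θ ^ j * ξ ((k : ℤ) + l - j) ω * ξ (k : ℤ) ω +
      ∑ j ∈ Finset.Icc 1 (m - 1), θ ^ j * ξ ((k : ℤ) + l) ω * ξ ((k : ℤ) - j) ω +
      ξ ((k : ℤ) + l) ω * ξ (k : ℤ) ω - θ ^ l * 𝔼[fun ω => (ξ 0 ω) ^ 2])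
    (l : ℕ) (hl1 : 1 ≤ l) (hlM : l ≤ M)
    (i k : ℕ) (hi : 1 ≤ i) (hik : i < k) :
    𝔼[fun ω => U k 0 ω * U i l ω] =
      2 * θ ^ l * (𝔼[fun ω => (ξ 0 ω) ^ 2]) ^ 2 *
        ((if k < i + l then (1 : ℝ) else 0) +
          (if i + l = k then (1 : ℝ) else 0) *
            ∑ j ∈ Finset.range (m - l), θ ^ (2 * j)) := by
  classical
  have hmul := UX.mulU hmeas hident hL4 hU
  -- L² membership of U p q
  have memU : ∀ p q : ℕ, MemLp (U p q) 2 ℙ := by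
    intro p q
    have hrep : U p q = fun ω =>
        (∑ j ∈ Finset.Icc 1 (m - 1), θ ^ j * (ξ ((p:ℤ)+q-j) ω * ξ (p:ℤ) ω))
        + (∑ j ∈ Finset.Icc 1 (m - 1), θ ^ j * (ξ ((p:ℤ)+q) ω * ξ ((p:ℤ)-j) ω))
        + ξ ((p:ℤ)+q) ω * ξ (p:ℤ) ω - θ ^ q * 𝔼[fun ω => (ξ 0 ω) ^ 2] := by
      funext ω; rw [hU p q ω]; simp only [mul_assoc]
    rw [hrep]
    apply MemLp.sub
    · apply MemLp.add
      · apply MemLp.add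
        · exact memLp_finset_sum _ fun j _ =>
            (UX.memL2_mul (UX.memL4 hident hL4 _) (UX.memL4 hident hL4 _)).const_mul _
        · exact memLp_finset_sum _ fun j _ =>
            (UX.memL2_mul (UX.memL4 hident hL4 _) (UX.memL4 hident hL4 _)).const_mul _
      · exact UX.memL2_mul (UX.memL4 hident hL4 _) (UX.memL4 hident hL4 _)
    · exact memLp_const _
  -- expectation of U k 0 is zero
  have hEU : ∫ ω, U k 0 ω = 0 := by
    have h := hmul k 0 (fun _ => 1) (memLp_const 1)
    simp only [one_mul, Nat.cast_zero, add_zero, pow_zero] at h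
    have e1 : ∀ j ∈ Finset.Icc 1 (m - 1),
        θ ^ j * ∫ ω, ξ ((k:ℤ) - j) ω * ξ (k:ℤ) ω = 0 := by
      intro j hj
      simp only [Finset.mem_Icc] at hj
      rw [UX.pair hmeas hindep hident hcentered, if_neg (by omega), mul_zero]
    have e2 : ∀ j ∈ Finset.Icc 1 (m - 1),
        θ ^ j * ∫ ω, ξ (k:ℤ) ω * ξ ((k:ℤ) - j) ω = 0 := by
      intro j hj
      simp only [Finset.mem_Icc] at hj
      rw [UX.pair hmeas hindep hident hcentered, if_neg (by omega), mul_zero]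
    rw [h, Finset.sum_eq_zero e1, Finset.sum_eq_zero e2,
      UX.pair hmeas hindep hident hcentered, if_pos rfl]
    simp
  -- key expansion of ∫ U k 0 * (ξ b1 * ξ b2)
  have hUmulP : ∀ b1 b2 : ℤ, b2 ≠ (k:ℤ) →
      (∫ ω, U k 0 ω * (ξ b1 ω * ξ b2 ω)) =
      2 * ∑ j ∈ Finset.Icc 1 (m - 1), θ ^ j *
        ((if (k:ℤ) = b1 then 𝔼[fun ω => (ξ 0 ω) ^ 2] else 0) *
         (if (k:ℤ) - j = b2 then 𝔼[fun ω => (ξ 0 ω) ^ 2] else 0)) := by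
    intro b1 b2 hb2
    have hcomm : (∫ ω, U k 0 ω * (ξ b1 ω * ξ b2 ω)) =
        ∫ ω, (fun ω' => ξ b1 ω' * ξ b2 ω') ω * U k 0 ω := by
      congr 1; funext ω; ring
    rw [hcomm, hmul k 0 _ (UX.memL2_mul (UX.memL4 hident hL4 b1) (UX.memL4 hident hL4 b2))]
    simp only [Nat.cast_zero, add_zero, pow_zero, one_mul]
    have e1 : ∀ j ∈ Finset.Icc 1 (m - 1),
        θ ^ j * ∫ ω, ξ b1 ω * ξ b2 ω * (ξ ((k:ℤ) - j) ω * ξ (k:ℤ) ω)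
          = θ ^ j * ((if (k:ℤ) = b1 then 𝔼[fun ω => (ξ 0 ω) ^ 2] else 0) *
            (if (k:ℤ) - j = b2 then 𝔼[fun ω => (ξ 0 ω) ^ 2] else 0)) := by
      intro j hj
      simp only [Finset.mem_Icc] at hj
      have hr : (∫ ω, ξ b1 ω * ξ b2 ω * (ξ ((k:ℤ) - j) ω * ξ (k:ℤ) ω)) =
          ∫ ω, ξ ((k:ℤ) - j) ω * ξ (k:ℤ) ω * (ξ b1 ω * ξ b2 ω) := by
        congr 1; funext ω; ring
      rw [hr, UX.E4 hmeas hindep hident hcentered _ _ _ _ (by omega) hb2]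
    have e2 : ∀ j ∈ Finset.Icc 1 (m - 1),
        θ ^ j * ∫ ω, ξ b1 ω * ξ b2 ω * (ξ (k:ℤ) ω * ξ ((k:ℤ) - j) ω)
          = θ ^ j * ((if (k:ℤ) = b1 then 𝔼[fun ω => (ξ 0 ω) ^ 2] else 0) *
            (if (k:ℤ) - j = b2 then 𝔼[fun ω => (ξ 0 ω) ^ 2] else 0)) := by
      intro j hj
      simp only [Finset.mem_Icc] at hj
      have hr : (∫ ω, ξ b1 ω * ξ b2 ω * (ξ (k:ℤ) ω * ξ ((k:ℤ) - j) ω)) =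
          ∫ ω, ξ ((k:ℤ) - j) ω * ξ (k:ℤ) ω * (ξ b1 ω * ξ b2 ω) := by
        congr 1; funext ω; ring
      rw [hr, UX.E4 hmeas hindep hident hcentered _ _ _ _ (by omega) hb2]
    have e3 : (∫ ω, ξ b1 ω * ξ b2 ω * (ξ (k:ℤ) ω * ξ (k:ℤ) ω)) =
        if b1 = b2 then 𝔼[fun ω => (ξ 0 ω) ^ 2] * 𝔼[fun ω => (ξ 0 ω) ^ 2] else 0 := by
      have hr : (∫ ω, ξ b1 ω * ξ b2 ω * (ξ (k:ℤ) ω * ξ (k:ℤ) ω)) =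
          ∫ ω, ξ (k:ℤ) ω * ξ (k:ℤ) ω * (ξ b1 ω * ξ b2 ω) := by
        congr 1; funext ω; ring
      rw [hr, UX.E4sq hmeas hindep hident hcentered _ _ _ hb2]
    rw [Finset.sum_congr rfl e1, Finset.sum_congr rfl e2, e3,
      UX.pair hmeas hindep hident hcentered, mul_ite, mul_zero]
    ring
  -- main expansion
  show (∫ ω, U k 0 ω * U i l ω) = _
  rw [hmul i l (U k 0) (memU k 0), hEU]
  have t1 : ∀ j' ∈ Finset.Icc 1 (m - 1),
      θ ^ j' * ∫ ω, U k 0 ω * (ξ ((i:ℤ)+l-j') ω * ξ (i:ℤ) ω)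
        = θ ^ j' * (2 * ∑ j ∈ Finset.Icc 1 (m - 1), θ ^ j *
          ((if (k:ℤ) = (i:ℤ)+l-j' then 𝔼[fun ω => (ξ 0 ω) ^ 2] else 0) *
           (if (k:ℤ) - j = (i:ℤ) then 𝔼[fun ω => (ξ 0 ω) ^ 2] else 0))) := by
    intro j' hj'
    rw [hUmulP _ _ (by omega)]
  have t2 : ∀ j' ∈ Finset.Icc 1 (m - 1),
      θ ^ j' * ∫ ω, U k 0 ω * (ξ ((i:ℤ)+l) ω * ξ ((i:ℤ)-j') ω)
        = θ ^ j' * (2 * ∑ j ∈ Finset.Icc 1 (m - 1), θ ^ j *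
          ((if (k:ℤ) = (i:ℤ)+l then 𝔼[fun ω => (ξ 0 ω) ^ 2] else 0) *
           (if (k:ℤ) - j = (i:ℤ)-j' then 𝔼[fun ω => (ξ 0 ω) ^ 2] else 0))) := by
    intro j' hj'
    simp only [Finset.mem_Icc] at hj'
    rw [hUmulP _ _ (by omega)]
  rw [Finset.sum_congr rfl t1, Finset.sum_congr rfl t2, hUmulP _ _ (by omega)]
  rw [mul_zero, sub_zero]
  rcases lt_trichotomy k (i + l) with hcase | hcase | hcase
  · -- Case A : k < i + l
    have hC : ¬((k:ℤ) = (i:ℤ) + l) := by omega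
    have hinner : ∀ c : ℝ, (∑ j ∈ Finset.Icc 1 (m - 1),
        θ ^ j * (c * (if (k:ℤ) - j = (i:ℤ) then 𝔼[fun ω => (ξ 0 ω) ^ 2] else 0)))
        = θ ^ (k - i) * (c * 𝔼[fun ω => (ξ 0 ω) ^ 2]) := by
      intro c
      have step : ∀ j ∈ Finset.Icc 1 (m - 1),
          θ ^ j * (c * (if (k:ℤ) - j = (i:ℤ) then 𝔼[fun ω => (ξ 0 ω) ^ 2] else 0)) =
          if j = k - i then θ ^ j * (c * 𝔼[fun ω => (ξ 0 ω) ^ 2]) else 0 := by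
        intro j hj
        simp only [Finset.mem_Icc] at hj
        by_cases hc : j = k - i
        · rw [if_pos (by omega), if_pos hc]
        · rw [if_neg (by omega), if_neg hc, mul_zero, mul_zero]
      rw [Finset.sum_congr rfl step, Finset.sum_ite_eq' (Finset.Icc 1 (m - 1)) (k - i)
        (fun j => θ ^ j * (c * 𝔼[fun ω => (ξ 0 ω) ^ 2])), if_pos (by simp only [Finset.mem_Icc]; omega)]
    have s1 : ∀ j' ∈ Finset.Icc 1 (m - 1),
        θ ^ j' * (2 * ∑ j ∈ Finset.Icc 1 (m - 1), θ ^ j *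
          ((if (k:ℤ) = (i:ℤ) + l - j' then 𝔼[fun ω => (ξ 0 ω) ^ 2] else 0) *
            (if (k:ℤ) - j = (i:ℤ) then 𝔼[fun ω => (ξ 0 ω) ^ 2] else 0)))
        = if j' = i + l - k then θ ^ j' * (2 * (θ ^ (k - i) * (𝔼[fun ω => (ξ 0 ω) ^ 2] * 𝔼[fun ω => (ξ 0 ω) ^ 2]))) else 0 := by
      intro j' hj'
      simp only [Finset.mem_Icc] at hj'
      by_cases hc : j' = i + l - k
      · rw [hinner, if_pos (by omega : (k:ℤ) = (i:ℤ) + l - j'), if_pos hc]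
      · rw [hinner, if_neg (by omega : ¬((k:ℤ) = (i:ℤ) + l - j')), if_neg hc]
        ring
    have s2 : ∀ j' ∈ Finset.Icc 1 (m - 1),
        θ ^ j' * (2 * ∑ j ∈ Finset.Icc 1 (m - 1), θ ^ j *
          ((if (k:ℤ) = (i:ℤ) + l then 𝔼[fun ω => (ξ 0 ω) ^ 2] else 0) *
            (if (k:ℤ) - j = (i:ℤ) - j' then 𝔼[fun ω => (ξ 0 ω) ^ 2] else 0))) = 0 := by
      intro j' hj'
      have hz : ∀ j ∈ Finset.Icc 1 (m - 1), θ ^ j *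
          ((if (k:ℤ) = (i:ℤ) + l then 𝔼[fun ω => (ξ 0 ω) ^ 2] else 0) *
            (if (k:ℤ) - j = (i:ℤ) - j' then 𝔼[fun ω => (ξ 0 ω) ^ 2] else 0)) = 0 := by
        intro j hj
        rw [if_neg hC, zero_mul, mul_zero]
      rw [Finset.sum_eq_zero hz, mul_zero, mul_zero]
    have s3 : ∀ j ∈ Finset.Icc 1 (m - 1), θ ^ j *
        ((if (k:ℤ) = (i:ℤ) + l then 𝔼[fun ω => (ξ 0 ω) ^ 2] else 0) *
          (if (k:ℤ) - j = (i:ℤ) then 𝔼[fun ω => (ξ 0 ω) ^ 2] else 0)) = 0 := by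
      intro j hj
      rw [if_neg hC, zero_mul, mul_zero]
    rw [Finset.sum_congr rfl s1, Finset.sum_eq_zero s2, Finset.sum_eq_zero s3,
      Finset.sum_ite_eq' (Finset.Icc 1 (m - 1)) (i + l - k)
        (fun j' => θ ^ j' * (2 * (θ ^ (k - i) * (𝔼[fun ω => (ξ 0 ω) ^ 2] * 𝔼[fun ω => (ξ 0 ω) ^ 2])))),
      if_pos (by simp only [Finset.mem_Icc]; omega),
      if_pos hcase, if_neg (by omega : ¬(i + l = k))]
    have hp : θ ^ (i + l - k) * θ ^ (k - i) = θ ^ l := by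
      rw [← pow_add]; congr 1; omega
    linear_combination (2 * 𝔼[fun ω => (ξ 0 ω) ^ 2] * 𝔼[fun ω => (ξ 0 ω) ^ 2]) * hp
  · -- Case B : k = i + l
    have hC : (k:ℤ) = (i:ℤ) + l := by omega
    have s1 : ∀ j' ∈ Finset.Icc 1 (m - 1),
        θ ^ j' * (2 * ∑ j ∈ Finset.Icc 1 (m - 1), θ ^ j *
          ((if (k:ℤ) = (i:ℤ) + l - j' then 𝔼[fun ω => (ξ 0 ω) ^ 2] else 0) *
            (if (k:ℤ) - j = (i:ℤ) then 𝔼[fun ω => (ξ 0 ω) ^ 2] else 0))) = 0 := by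
      intro j' hj'
      simp only [Finset.mem_Icc] at hj'
      have hz : ∀ j ∈ Finset.Icc 1 (m - 1), θ ^ j *
          ((if (k:ℤ) = (i:ℤ) + l - j' then 𝔼[fun ω => (ξ 0 ω) ^ 2] else 0) *
            (if (k:ℤ) - j = (i:ℤ) then 𝔼[fun ω => (ξ 0 ω) ^ 2] else 0)) = 0 := by
        intro j hj
        rw [if_neg (by omega : ¬((k:ℤ) = (i:ℤ) + l - j')), zero_mul, mul_zero]
      rw [Finset.sum_eq_zero hz, mul_zero, mul_zero]
    have s2 : ∀ j' ∈ Finset.Icc 1 (m - 1),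
        θ ^ j' * (2 * ∑ j ∈ Finset.Icc 1 (m - 1), θ ^ j *
          ((if (k:ℤ) = (i:ℤ) + l then 𝔼[fun ω => (ξ 0 ω) ^ 2] else 0) *
            (if (k:ℤ) - j = (i:ℤ) - j' then 𝔼[fun ω => (ξ 0 ω) ^ 2] else 0)))
        = if j' ∈ Finset.Icc 1 (m - 1 - l) then (2 * (𝔼[fun ω => (ξ 0 ω) ^ 2] * 𝔼[fun ω => (ξ 0 ω) ^ 2])) * θ ^ (l + 2 * j') else 0 := by
      intro j' hj'
      simp only [Finset.mem_Icc] at hj'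
      have step : ∀ j ∈ Finset.Icc 1 (m - 1), θ ^ j *
          ((if (k:ℤ) = (i:ℤ) + l then 𝔼[fun ω => (ξ 0 ω) ^ 2] else 0) *
            (if (k:ℤ) - j = (i:ℤ) - j' then 𝔼[fun ω => (ξ 0 ω) ^ 2] else 0))
          = if j = l + j' then θ ^ j * (𝔼[fun ω => (ξ 0 ω) ^ 2] * 𝔼[fun ω => (ξ 0 ω) ^ 2]) else 0 := by
        intro j hj
        simp only [Finset.mem_Icc] at hj
        by_cases hc : j = l + j'
        · rw [if_pos hC, if_pos (by omega : (k:ℤ) - j = (i:ℤ) - j'), if_pos hc]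
        · rw [if_neg (by omega : ¬((k:ℤ) - j = (i:ℤ) - j')), if_neg hc, mul_zero, mul_zero]
      rw [Finset.sum_congr rfl step, Finset.sum_ite_eq' (Finset.Icc 1 (m - 1)) (l + j')
        (fun j => θ ^ j * (𝔼[fun ω => (ξ 0 ω) ^ 2] * 𝔼[fun ω => (ξ 0 ω) ^ 2]))]
      by_cases hmem : j' ≤ m - 1 - l
      · rw [if_pos (by simp only [Finset.mem_Icc]; omega),
          if_pos (by simp only [Finset.mem_Icc]; omega),
          show l + 2 * j' = j' + (l + j') from by omega, pow_add]
        ring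
      · rw [if_neg (by simp only [Finset.mem_Icc]; omega),
          if_neg (by simp only [Finset.mem_Icc]; omega)]
        ring
    have step3 : ∀ j ∈ Finset.Icc 1 (m - 1), θ ^ j *
        ((if (k:ℤ) = (i:ℤ) + l then 𝔼[fun ω => (ξ 0 ω) ^ 2] else 0) *
          (if (k:ℤ) - j = (i:ℤ) then 𝔼[fun ω => (ξ 0 ω) ^ 2] else 0))
        = if j = l then θ ^ j * (𝔼[fun ω => (ξ 0 ω) ^ 2] * 𝔼[fun ω => (ξ 0 ω) ^ 2]) else 0 := by
      intro j hj
      simp only [Finset.mem_Icc] at hj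
      by_cases hc : j = l
      · rw [if_pos hC, if_pos (by omega : (k:ℤ) - j = (i:ℤ)), if_pos hc]
      · rw [if_neg (by omega : ¬((k:ℤ) - j = (i:ℤ))), if_neg hc, mul_zero, mul_zero]
    rw [Finset.sum_eq_zero s1, Finset.sum_congr rfl s2, Finset.sum_congr rfl step3,
      Finset.sum_ite_eq' (Finset.Icc 1 (m - 1)) l (fun j => θ ^ j * (𝔼[fun ω => (ξ 0 ω) ^ 2] * 𝔼[fun ω => (ξ 0 ω) ^ 2])),
      if_pos (by simp only [Finset.mem_Icc]; omega),
      Finset.sum_ite_mem,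
      show Finset.Icc 1 (m - 1) ∩ Finset.Icc 1 (m - 1 - l) = Finset.Icc 1 (m - 1 - l) from by
        ext x; simp only [Finset.mem_inter, Finset.mem_Icc]; omega,
      ← Finset.Ico_add_one_right_eq_Icc, Finset.sum_Ico_eq_sum_range,
      show m - 1 - l + 1 - 1 = m - 1 - l from by omega,
      if_neg (by omega : ¬(k < i + l)), if_pos (by omega : i + l = k),
      show m - l = (m - 1 - l) + 1 from by omega, Finset.sum_range_succ']
    have tr : ∀ x ∈ Finset.range (m - 1 - l),
        (2 * (𝔼[fun ω => (ξ 0 ω) ^ 2] * 𝔼[fun ω => (ξ 0 ω) ^ 2])) * θ ^ (l + 2 * (1 + x))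
        = (2 * θ ^ l * 𝔼[fun ω => (ξ 0 ω) ^ 2] ^ 2) * θ ^ (2 * (x + 1)) := by
      intro x _
      rw [show l + 2 * (1 + x) = l + 2 * (x + 1) from by ring, pow_add]
      ring
    rw [Finset.sum_congr rfl tr, ← Finset.mul_sum]
    ring
  · -- Case C : i + l < k
    have hC : ¬((k:ℤ) = (i:ℤ) + l) := by omega
    have s1 : ∀ j' ∈ Finset.Icc 1 (m - 1),
        θ ^ j' * (2 * ∑ j ∈ Finset.Icc 1 (m - 1), θ ^ j *
          ((if (k:ℤ) = (i:ℤ) + l - j' then 𝔼[fun ω => (ξ 0 ω) ^ 2] else 0) *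
            (if (k:ℤ) - j = (i:ℤ) then 𝔼[fun ω => (ξ 0 ω) ^ 2] else 0))) = 0 := by
      intro j' hj'
      simp only [Finset.mem_Icc] at hj'
      have hz : ∀ j ∈ Finset.Icc 1 (m - 1), θ ^ j *
          ((if (k:ℤ) = (i:ℤ) + l - j' then 𝔼[fun ω => (ξ 0 ω) ^ 2] else 0) *
            (if (k:ℤ) - j = (i:ℤ) then 𝔼[fun ω => (ξ 0 ω) ^ 2] else 0)) = 0 := by
        intro j hj
        rw [if_neg (by omega : ¬((k:ℤ) = (i:ℤ) + l - j')), zero_mul, mul_zero]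
      rw [Finset.sum_eq_zero hz, mul_zero, mul_zero]
    have s2 : ∀ j' ∈ Finset.Icc 1 (m - 1),
        θ ^ j' * (2 * ∑ j ∈ Finset.Icc 1 (m - 1), θ ^ j *
          ((if (k:ℤ) = (i:ℤ) + l then 𝔼[fun ω => (ξ 0 ω) ^ 2] else 0) *
            (if (k:ℤ) - j = (i:ℤ) - j' then 𝔼[fun ω => (ξ 0 ω) ^ 2] else 0))) = 0 := by
      intro j' hj'
      have hz : ∀ j ∈ Finset.Icc 1 (m - 1), θ ^ j *
          ((if (k:ℤ) = (i:ℤ) + l then 𝔼[fun ω => (ξ 0 ω) ^ 2] else 0) *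
            (if (k:ℤ) - j = (i:ℤ) - j' then 𝔼[fun ω => (ξ 0 ω) ^ 2] else 0)) = 0 := by
        intro j hj
        rw [if_neg hC, zero_mul, mul_zero]
      rw [Finset.sum_eq_zero hz, mul_zero, mul_zero]
    have s3 : ∀ j ∈ Finset.Icc 1 (m - 1), θ ^ j *
        ((if (k:ℤ) = (i:ℤ) + l then 𝔼[fun ω => (ξ 0 ω) ^ 2] else 0) *
          (if (k:ℤ) - j = (i:ℤ) then 𝔼[fun ω => (ξ 0 ω) ^ 2] else 0)) = 0 := by
      intro j hj
      rw [if_neg hC, zero_mul, mul_zero]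
    rw [Finset.sum_eq_zero s1, Finset.sum_eq_zero s2, Finset.sum_eq_zero s3,
      if_neg (by omega : ¬(k < i + l)), if_neg (by omega : ¬(i + l = k))]
    ring
end
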